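/- (Proposition 2, closed-form part.) Assume n̄ ≥ 1 and hypothesis (H'). Let Γ⁻, Γ⁺ ∈ ℝ and set b(n) = Γ⁻·n, c(n) = Γ⁺·n. Let x¹ be defined on {0,…,9n̄+7} by the recurrences x¹(n̄−1) = b(n̄)/e(n̄−1), x¹(n) = (d(n+1)/e(n))·x¹(n+1) for 0 ≤ n < n̄−1, x¹(n̄+1) = c(n̄)/d(n̄+1), x¹(n) = (e(n−1)/d(n))·x¹(n−1) for n̄+1 < n ≤ 9n̄+7. Then for 1 ≤ m ≤ n̄: x¹(n̄−m) = (b(n̄)/e(n̄−1))·∏_{l=2}^{m} d(n̄−l+1)/e(n̄−l), and for 1 ≤ m ≤ 8n̄+7: x¹(n̄+m) = (c(n̄)/d(n̄+1))·∏_{l=2}^{m} e(n̄+l−1)/d(n̄+l) (empty products equal 1). Consequently, if x¹(n̄) is chosen so that Σ_{n=0}^{9n̄+7} x¹(n) = 0, then −x¹(n̄) = (b(n̄)/e(n̄−1))·Σ_{m=1}^{n̄} ∏_{l=2}^{m} d(n̄−l+1)/e(n̄−l) + (c(n̄)/d(n̄+1))·Σ_{m=1}^{8n̄+7} ∏_{l=2}^{m}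 e(n̄+l−1)/d(n̄+l), which is the estimated loss of fidelity of the steady state to the target Fock state |n̄⟩ in presence of decoherence. -/

import Mathlib

noncomputable section

/-- α(n) = π·√((n+1)/(n̄+1)) -/
def alphaAng (nbar n : ℕ) : ℝ := Real.pi * Real.sqrt (((n : ℝ) + 1) / ((nbar : ℝ) + 1))

/-- β(n) = θ₂·√n/2 -/
def betaAng (θ₂ : ℝ) (n : ℕ) : ℝ := θ₂ * Real.sqrt (n : ℝ) / 2

/-- downward transition probability d(n) = sin²(β(n))·cos²(α(n)/2) -/
def dCoef (nbar : ℕ) (θ₂ : ℝ) (n : ℕ) : ℝ :=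
  (Real.sin (betaAng θ₂ n))^2 * (Real.cos (alphaAng nbar n / 2))^2

/-- upward transition probability e(n) = sin²(α(n))·cos⁴(β(n)/2) -/
def eCoef (nbar : ℕ) (θ₂ : ℝ) (n : ℕ) : ℝ :=
  (Real.sin (alphaAng nbar n))^2 * (Real.cos (betaAng θ₂ n / 2))^4

/-- Extended nondegeneracy hypothesis (H'): θ₂ ≠ kπ/√n for 1 ≤ n ≤ 9n̄+7, k ∈ ℕ. -/
def HypH' (nbar : ℕ) (θ₂ : ℝ) : Prop :=
  ∀ n k : ℕ, 1 ≤ n → n ≤ 9*nbar+7 → θ₂ ≠ (k : ℝ) * Real.pi / Real.sqrt (n : ℝ)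

/-- Proposition 2, closed-form part: closed-form products for x¹ and
the resulting estimated fidelity loss −x¹(n̄) under the normalization Σ x¹(n) = 0. -/
theorem perturbation_closed_form (nbar : ℕ) (θ₂ : ℝ) (hnbar : 1 ≤ nbar)
    (hH : HypH' nbar θ₂) (Γm Γp : ℝ) (x1 : ℕ → ℝ)
    (h1 : x1 (nbar - 1) = Γm * nbar / eCoef nbar θ₂ (nbar - 1))
    (h2 : ∀ n : ℕ, n < nbar - 1 → x1 n = (dCoef nbar θ₂ (n+1) / eCoef nbar θ₂ n) * x1 (n+1))
    (h3 : x1 (nbar + 1) = Γp * nbar / dCoef nbar θ₂ (nbar + 1))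
    (h4 : ∀ n : ℕ, nbar + 1 < n → n ≤ 9*nbar+7 →
      x1 n = (eCoef nbar θ₂ (n-1) / dCoef nbar θ₂ n) * x1 (n-1)) :
    (∀ m : ℕ, 1 ≤ m → m ≤ nbar →
      x1 (nbar - m) = (Γm * nbar / eCoef nbar θ₂ (nbar - 1)) *
        ∏ l ∈ Finset.Icc 2 m, dCoef nbar θ₂ (nbar - l + 1) / eCoef nbar θ₂ (nbar - l)) ∧
    (∀ m : ℕ, 1 ≤ m → m ≤ 8*nbar+7 →
      x1 (nbar + m) = (Γp * nbar / dCoef nbar θ₂ (nbar + 1)) *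
        ∏ l ∈ Finset.Icc 2 m, eCoef nbar θ₂ (nbar + l - 1) / dCoef nbar θ₂ (nbar + l)) ∧
    ((∑ n ∈ Finset.range (9*nbar+8), x1 n) = 0 →
      -x1 nbar
        = (Γm * nbar / eCoef nbar θ₂ (nbar - 1)) *
            ∑ m ∈ Finset.Icc 1 nbar,
              ∏ l ∈ Finset.Icc 2 m, dCoef nbar θ₂ (nbar - l + 1) / eCoef nbar θ₂ (nbar - l)
          + (Γp * nbar / dCoef nbar θ₂ (nbar + 1)) *
            ∑ m ∈ Finset.Icc 1 (8*nbar+7),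
              ∏ l ∈ Finset.Icc 2 m, eCoef nbar θ₂ (nbar + l - 1) / dCoef nbar θ₂ (nbar + l)) := by

  have hA : ∀ m : ℕ, 1 ≤ m → m ≤ nbar →
      x1 (nbar - m) = (Γm * nbar / eCoef nbar θ₂ (nbar - 1)) *
        ∏ l ∈ Finset.Icc 2 m, dCoef nbar θ₂ (nbar - l + 1) / eCoef nbar θ₂ (nbar - l) := by
    intro m
    induction m with
    | zero => omega
    | succ m ih =>
      intro _ hm
      by_cases hm0 : m = 0
      · subst hm0
        simp [h1, Finset.Icc_eq_empty_of_lt]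
      · have hm1 : 1 ≤ m := Nat.one_le_iff_ne_zero.mpr hm0
        have key := h2 (nbar - (m+1)) (by omega)
        have e1 : nbar - (m+1) + 1 = nbar - m := by omega
        rw [e1] at key
        rw [key, ih hm1 (by omega), Finset.prod_Icc_succ_top (by omega : 2 ≤ m+1), e1]
        ring
  have hB : ∀ m : ℕ, 1 ≤ m → m ≤ 8*nbar+7 →
      x1 (nbar + m) = (Γp * nbar / dCoef nbar θ₂ (nbar + 1)) *
        ∏ l ∈ Finset.Icc 2 m, eCoef nbar θ₂ (nbar + l - 1) / dCoef nbar θ₂ (nbar + l) := by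
    intro m
    induction m with
    | zero => omega
    | succ m ih =>
      intro _ hm
      by_cases hm0 : m = 0
      · subst hm0
        simp [h3, Finset.Icc_eq_empty_of_lt]
      · have hm1 : 1 ≤ m := Nat.one_le_iff_ne_zero.mpr hm0
        have key := h4 (nbar + (m+1)) (by omega) (by omega)
        have e1 : nbar + (m+1) - 1 = nbar + m := by omega
        rw [e1] at key
        rw [key, ih hm1 (by omega), Finset.prod_Icc_succ_top (by omega : 2 ≤ m+1), e1]
        ring
  refine ⟨hA, hB, ?_⟩
  intro hsum
  have hleft : ∑ n ∈ Finset.Ico 0 nbar, x1 n = ∑ m ∈ Finset.Icc 1 nbar, x1 (nbar - m) := by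
    apply Finset.sum_nbij' (fun n => nbar - n) (fun m => nbar - m)
    · intro a ha
      simp only [Finset.mem_Ico, Finset.mem_Icc] at *
      omega
    · intro a ha
      simp only [Finset.mem_Ico, Finset.mem_Icc] at *
      omega
    · intro a ha
      simp only [Finset.mem_Ico] at ha
      omega
    · intro a ha
      simp only [Finset.mem_Icc] at ha
      omega
    · intro a ha
      simp only [Finset.mem_Ico] at ha
      congr 1
      omega
  have hright : ∑ n ∈ Finset.Ico nbar (9*nbar+8), x1 n
      = x1 nbar + ∑ m ∈ Finset.Icc 1 (8*nbar+7), x1 (nbar + m) := by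
    rw [show 9*nbar+8 = nbar + (8*nbar+8) by omega, Finset.sum_Ico_eq_sum_range]
    simp only [Nat.add_sub_cancel_left]
    rw [show 8*nbar+8 = (8*nbar+7)+1 by omega, Finset.sum_range_succ']
    rw [show Finset.Icc 1 (8*nbar+7) = Finset.Ico 1 (8*nbar+8) by
      (rw [← Finset.Ico_add_one_right_eq_Icc]; rfl), Finset.sum_Ico_eq_sum_range]
    rw [show (8*nbar+8-1) = 8*nbar+7 by omega, add_comm, Nat.add_zero]
    congr 1
    apply Finset.sum_congr rfl
    intro i _
    congr 1
    omega
  have key : ∑ n ∈ Finset.range (9*nbar+8), x1 n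
      = x1 nbar + ∑ m ∈ Finset.Icc 1 nbar, x1 (nbar - m)
        + ∑ m ∈ Finset.Icc 1 (8*nbar+7), x1 (nbar + m) := by
    rw [Finset.range_eq_Ico,
      ← Finset.sum_Ico_consecutive x1 (Nat.zero_le nbar) (by omega : nbar ≤ 9*nbar+8),
      hleft, hright]
    ring
  rw [key] at hsum
  have hs1 : ∑ m ∈ Finset.Icc 1 nbar, x1 (nbar - m)
      = (Γm * nbar / eCoef nbar θ₂ (nbar - 1)) *
          ∑ m ∈ Finset.Icc 1 nbar,
            ∏ l ∈ Finset.Icc 2 m, dCoef nbar θ₂ (nbar - l + 1) / eCoef nbar θ₂ (nbar - l) := by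
    rw [Finset.mul_sum]
    apply Finset.sum_congr rfl
    intro m hm
    simp only [Finset.mem_Icc] at hm
    exact hA m hm.1 hm.2
  have hs2 : ∑ m ∈ Finset.Icc 1 (8*nbar+7), x1 (nbar + m)
      = (Γp * nbar / dCoef nbar θ₂ (nbar + 1)) *
          ∑ m ∈ Finset.Icc 1 (8*nbar+7),
            ∏ l ∈ Finset.Icc 2 m, eCoef nbar θ₂ (nbar + l - 1) / dCoef nbar θ₂ (nbar + l) := by
    rw [Finset.mul_sum]
    apply Finset.sum_congr rfl
    intro m hm
    simp only [Finset.mem_Icc] at hm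
    exact hB m hm.1 hm.2
  rw [hs1, hs2] at hsum
  linarith
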